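/- Let W(t) = t⁵ − 5t⁴ − 10t³ + 10t² + 5t − 1, let f(t) = (t²+1)·|W(t)|^{−4/5}, and define the fundamental period Ω = (1/5)·∫_{−∞}^{∞} f(t) dt (a finite positive real number). Let ξ_j = tan(π/4 + 2πj/5) for j = 0,1,2,3,4 (these are exactly the real roots of W, with ξ₁ < ξ₄ < ξ₂ < ξ₀ = 1 < ξ₃). Then: ∫_{1}^{ξ₃} f(t) dt = Ω, ∫_{1}^{ξ₂} f(t) dt = −Ω, ∫_{1}^{ξ₄} f(t) dt = −2Ω, ∫_{1}^{ξ₁} f(t) dt = −3Ω, and ∫_{−1}^{1} f(t) dt = (5/2)·Ω. -/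

import Mathlib

open MeasureTheory Real Set intervalIntegral


/-- periodic + integrable on one period → interval integrable everywhere -/
lemma aux_per_int {F : ℝ → ℝ} {T : ℝ} (hT : 0 < T) (hp : Function.Periodic F T)
    (h : IntervalIntegrable F volume 0 T) (a b : ℝ) : IntervalIntegrable F volume a b := by
  have key : ∀ n : ℕ, IntervalIntegrable F volume 0 (n * T) := by
    intro n
    induction n with
    | zero => simp
    | succ n ih =>
      have h2 : IntervalIntegrable F volume (0 + (n : ℝ) * T) (T + (n : ℝ) * T) := by
        have h3 := h.comp_sub_right ((n : ℝ) * T)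
        simpa only [hp.sub_nat_mul_eq] using h3
      rw [zero_add] at h2
      have h4 := ih.trans h2
      rwa [show (((n : ℕ) + 1 : ℕ) : ℝ) * T = T + (n : ℝ) * T by push_cast; ring]
  have keyneg : ∀ n : ℕ, IntervalIntegrable F volume (-((n : ℝ) * T)) 0 := by
    intro n
    have h2 : IntervalIntegrable F volume (0 - (n : ℝ) * T) ((n : ℝ) * T - (n : ℝ) * T) := by
      have h3 := (key n).comp_add_right ((n : ℝ) * T)
      have h4 : ∀ x : ℝ, F (x + (n : ℝ) * T) = F x := fun x => by
        simpa using (hp.sub_nat_mul_eq (x := x + (n : ℝ) * T) n).symm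
      simpa only [h4] using h3
    rw [zero_sub, sub_self] at h2
    exact h2
  obtain ⟨n, hn⟩ := exists_nat_ge (max |a| |b| / T)
  have hn' : max |a| |b| ≤ n * T := by
    rw [div_le_iff₀ hT] at hn; linarith
  have full : IntervalIntegrable F volume (-((n : ℝ) * T)) (n * T) := (keyneg n).trans (key n)
  refine full.mono_set ?_
  rw [uIcc_of_le (by nlinarith [abs_nonneg a] : -((n:ℝ) * T) ≤ n * T)]
  have ha := (abs_le.mp (le_trans (le_max_left _ _) hn'))
  have hb := (abs_le.mp (le_trans (le_max_right _ _) hn'))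
  exact uIcc_subset_Icc ⟨ha.1, ha.2⟩ ⟨hb.1, hb.2⟩

noncomputable def gg (θ : ℝ) : ℝ :=
  (2:ℝ) ^ (-(2:ℝ)/5) * |Real.sin (5*θ - Real.pi/4)| ^ (-(4:ℝ)/5)

lemma abs_rpow_int (a b : ℝ) :
    IntervalIntegrable (fun x : ℝ => |x| ^ (-(4:ℝ)/5)) volume a b := by
  have base : ∀ c : ℝ, 0 ≤ c → IntervalIntegrable (fun x : ℝ => |x| ^ (-(4:ℝ)/5)) volume 0 c := by
    intro c hc
    rw [intervalIntegrable_iff, uIoc_of_le hc]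
    have h1 : IntervalIntegrable (fun x : ℝ => x ^ (-(4:ℝ)/5)) volume 0 c :=
      intervalIntegrable_rpow' (by norm_num)
    rw [intervalIntegrable_iff, uIoc_of_le hc] at h1
    exact h1.congr_fun (fun x hx => by rw [abs_of_pos hx.1]) measurableSet_Ioc
  have all0 : ∀ c : ℝ, IntervalIntegrable (fun x : ℝ => |x| ^ (-(4:ℝ)/5)) volume 0 c := by
    intro c
    rcases le_or_gt 0 c with hc | hc
    · exact base c hc
    · rw [IntervalIntegrable.iff_comp_neg]
      simpa using base (-c) (by linarith)
  exact (all0 a).symm.trans (all0 b)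

lemma sinpow_per : Function.Periodic (fun x : ℝ => |Real.sin x| ^ (-(4:ℝ)/5)) π := by
  intro x; simp [Real.sin_add_pi]

lemma sinpow_meas : Measurable (fun x : ℝ => |Real.sin x| ^ (-(4:ℝ)/5)) := by fun_prop

lemma sinpow_base : IntervalIntegrable (fun x : ℝ => |Real.sin x| ^ (-(4:ℝ)/5)) volume
    (-(π/2)) (π/2) := by
  have hb : IntervalIntegrable (fun x : ℝ => 2 * |x| ^ (-(4:ℝ)/5)) volume (-(π/2)) (π/2) :=
    (abs_rpow_int _ _).const_mul 2
  refine hb.mono_fun sinpow_meas.aestronglyMeasurable ?_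
  have hsub : uIoc (-(π/2)) (π/2) ⊆ Icc (-(π/2)) (π/2) := by
    rw [uIoc_of_le (by linarith [pi_pos] : -(π/2) ≤ π/2)]
    exact Ioc_subset_Icc_self
  filter_upwards [ae_restrict_mem measurableSet_uIoc] with x hx
  have hx' := hsub hx
  have hinv : (1:ℝ)/4 ≤ 1/π := one_div_le_one_div_of_le Real.pi_pos Real.pi_le_four
  have h1 : |x| / 2 ≤ |Real.sin x| := by
    rcases le_or_gt 0 x with h0 | h0
    · rw [abs_of_nonneg h0, abs_of_nonneg (Real.sin_nonneg_of_nonneg_of_le_pi h0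
        (by linarith [pi_pos, hx'.2]))]
      have hms := Real.mul_le_sin h0 hx'.2
      calc x / 2 = 2 * x * (1/4) := by ring
        _ ≤ 2 * x * (1/π) := mul_le_mul_of_nonneg_left hinv (by linarith)
        _ = 2 / π * x := by ring
        _ ≤ Real.sin x := hms
    · rw [abs_of_neg h0, abs_of_neg (Real.sin_neg_of_neg_of_neg_pi_lt h0
        (by linarith [pi_pos, hx'.1]))]
      have hms := Real.mul_le_sin (show (0:ℝ) ≤ -x by linarith) (by linarith [hx'.1])
      rw [Real.sin_neg] at hms
      calc -x / 2 = 2 * (-x) * (1/4) := by ring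
        _ ≤ 2 * (-x) * (1/π) := mul_le_mul_of_nonneg_left hinv (by linarith)
        _ = 2 / π * (-x) := by ring
        _ ≤ -Real.sin x := hms
  have e1 : ‖|Real.sin x| ^ (-(4:ℝ)/5)‖ = |Real.sin x| ^ (-(4:ℝ)/5) := by
    rw [Real.norm_eq_abs]; exact abs_of_nonneg (Real.rpow_nonneg (abs_nonneg _) _)
  have e2 : ‖2 * |x| ^ (-(4:ℝ)/5)‖ = 2 * |x| ^ (-(4:ℝ)/5) := by
    rw [Real.norm_eq_abs]; exact abs_of_nonneg (by positivity)
  show ‖|Real.sin x| ^ (-(4:ℝ)/5)‖ ≤ ‖2 * |x| ^ (-(4:ℝ)/5)‖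
  rw [e1, e2]
  rcases eq_or_ne x 0 with rfl | hx0
  · simp [Real.zero_rpow (show (-(4:ℝ)/5) ≠ 0 by norm_num)]
  · have hpos : 0 < |x| / 2 := by positivity
    have h2r : (1:ℝ)/2 ≤ (2:ℝ) ^ (-(4:ℝ)/5) := by
      have := Real.rpow_le_rpow_of_exponent_le (show (1:ℝ) ≤ 2 by norm_num)
        (show (-1:ℝ) ≤ -(4:ℝ)/5 by norm_num)
      rwa [Real.rpow_neg_one, show ((2:ℝ))⁻¹ = 1/2 by norm_num] at this
    calc |Real.sin x| ^ (-(4:ℝ)/5) ≤ (|x| / 2) ^ (-(4:ℝ)/5) :=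
          Real.rpow_le_rpow_of_nonpos hpos h1 (by norm_num)
      _ = |x| ^ (-(4:ℝ)/5) / 2 ^ (-(4:ℝ)/5) := Real.div_rpow (abs_nonneg _) (by norm_num) _
      _ ≤ 2 * |x| ^ (-(4:ℝ)/5) := by
          rw [div_le_iff₀ (by positivity)]
          nlinarith [Real.rpow_nonneg (abs_nonneg x) (-(4:ℝ)/5)]

lemma sinpow_int (a b : ℝ) :
    IntervalIntegrable (fun x : ℝ => |Real.sin x| ^ (-(4:ℝ)/5)) volume a b := by
  have hbase2 : IntervalIntegrable (fun x : ℝ => |Real.sin x| ^ (-(4:ℝ)/5)) volume 0 π := by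
    have p1 : IntervalIntegrable (fun x : ℝ => |Real.sin x| ^ (-(4:ℝ)/5)) volume 0 (π/2) :=
      sinpow_base.mono_set (by
        rw [uIcc_of_le (by linarith [pi_pos] : (0:ℝ) ≤ π/2),
          uIcc_of_le (by linarith [pi_pos] : -(π/2) ≤ π/2)]
        exact Icc_subset_Icc (by linarith [pi_pos]) le_rfl)
    have p0 : IntervalIntegrable (fun x : ℝ => |Real.sin x| ^ (-(4:ℝ)/5)) volume (-(π/2)) 0 :=
      sinpow_base.mono_set (by
        rw [uIcc_of_le (by linarith [pi_pos] : -(π/2) ≤ (0:ℝ)),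
          uIcc_of_le (by linarith [pi_pos] : -(π/2) ≤ π/2)]
        exact Icc_subset_Icc le_rfl (by linarith [pi_pos]))
    have p2 : IntervalIntegrable (fun x : ℝ => |Real.sin x| ^ (-(4:ℝ)/5)) volume
        (-(π/2) + π) (0 + π) := by
      have h3 := p0.comp_sub_right π
      have h4 : ∀ x : ℝ, |Real.sin (x - π)| ^ (-(4:ℝ)/5) = |Real.sin x| ^ (-(4:ℝ)/5) := by
        intro x; rw [Real.sin_sub_pi, abs_neg]
      simpa only [h4] using h3
    rw [show -(π/2) + π = π/2 by ring, zero_add] at p2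
    exact p1.trans p2
  exact aux_per_int pi_pos sinpow_per hbase2 a b

lemma gg_int (a b : ℝ) : IntervalIntegrable gg volume a b := by
  have h1 : IntervalIntegrable (fun x : ℝ => |Real.sin (x - π/4)| ^ (-(4:ℝ)/5)) volume
      (5*a) (5*b) := by
    have h0 := (sinpow_int (5*a - π/4) (5*b - π/4)).comp_sub_right (π/4)
    rw [show 5*a - π/4 + π/4 = 5*a by ring, show 5*b - π/4 + π/4 = 5*b by ring] at h0
    exact h0
  have h2 := h1.comp_mul_left (c := 5)
  rw [show 5*a/5 = a by ring, show 5*b/5 = b by ring] at h2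
  exact h2.const_mul _

lemma sin5 (θ : ℝ) : Real.sin (5*θ) =
    5*(Real.cos θ)^4*(Real.sin θ) - 10*(Real.cos θ)^2*(Real.sin θ)^3 + (Real.sin θ)^5 := by
  rw [show (5:ℝ)*θ = 2*θ + 3*θ by ring, Real.sin_add, Real.sin_two_mul, Real.cos_two_mul,
    Real.sin_three_mul, Real.cos_three_mul]
  linear_combination (Real.sin θ * (3*Real.cos θ^2 - Real.sin θ^2 + 3)) * (Real.sin_sq_add_cos_sq θ)

lemma cos5 (θ : ℝ) : Real.cos (5*θ) =
    (Real.cos θ)^5 - 10*(Real.cos θ)^3*(Real.sin θ)^2 + 5*(Real.cos θ)*(Real.sin θ)^4 := by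
  rw [show (5:ℝ)*θ = 2*θ + 3*θ by ring, Real.cos_add, Real.sin_two_mul, Real.cos_two_mul,
    Real.sin_three_mul, Real.cos_three_mul]
  linear_combination (Real.cos θ * (7*Real.cos θ^2 + 3*Real.sin θ^2 - 3)) * (Real.sin_sq_add_cos_sq θ)

noncomputable def ff (t : ℝ) : ℝ :=
  (t^2 + 1) * |t^5 - 5*t^4 - 10*t^3 + 10*t^2 + 5*t - 1| ^ (-(4:ℝ)/5)


lemma key_id {θ : ℝ} (hθ : θ ∈ Ioo (-(π/2)) (π/2)) :
    (1 / Real.cos θ ^ 2) * ff (Real.tan θ) = gg θ := by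
  have hc : 0 < Real.cos θ := Real.cos_pos_of_mem_Ioo hθ
  have hc' : Real.cos θ ≠ 0 := hc.ne'
  have h1 : Real.tan θ^5 - 5*Real.tan θ^4 - 10*Real.tan θ^3 + 10*Real.tan θ^2 + 5*Real.tan θ - 1
      = (Real.sin (5*θ) - Real.cos (5*θ)) / Real.cos θ^5 := by
    rw [Real.tan_eq_sin_div_cos, sin5, cos5]
    field_simp
    ring
  have hA : Real.sin (5*θ) - Real.cos (5*θ) = Real.sqrt 2 * Real.sin (5*θ - π/4) := by
    rw [Real.sin_sub, Real.cos_pi_div_four, Real.sin_pi_div_four]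
    have h2 : Real.sqrt 2 * Real.sqrt 2 = 2 := Real.mul_self_sqrt (by norm_num)
    linear_combination (-(Real.sin (5*θ) - Real.cos (5*θ))/2) * h2
  have hT : Real.tan θ^2 + 1 = 1 / Real.cos θ^2 := by
    rw [Real.tan_eq_sin_div_cos]
    field_simp
    exact Real.sin_sq_add_cos_sq θ
  have habs : |Real.tan θ^5 - 5*Real.tan θ^4 - 10*Real.tan θ^3 + 10*Real.tan θ^2 + 5*Real.tan θ - 1|
      = Real.sqrt 2 * |Real.sin (5*θ - π/4)| / Real.cos θ^5 := by
    rw [h1, hA, abs_div, abs_of_pos (pow_pos hc 5), abs_mul,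
      abs_of_nonneg (Real.sqrt_nonneg 2)]
  have hrpow : (Real.sqrt 2 * |Real.sin (5*θ - π/4)| / Real.cos θ^5) ^ (-(4:ℝ)/5)
      = (2:ℝ) ^ (-(2:ℝ)/5) * |Real.sin (5*θ - π/4)| ^ (-(4:ℝ)/5) * Real.cos θ^4 := by
    rw [Real.div_rpow (by positivity) (pow_pos hc 5).le,
      Real.mul_rpow (Real.sqrt_nonneg 2) (abs_nonneg _)]
    have e1 : (Real.sqrt 2) ^ (-(4:ℝ)/5) = (2:ℝ) ^ (-(2:ℝ)/5) := by
      rw [Real.sqrt_eq_rpow, ← Real.rpow_mul (by norm_num : (0:ℝ) ≤ 2)]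
      norm_num
    have e2 : (Real.cos θ^5) ^ (-(4:ℝ)/5) = (Real.cos θ^4)⁻¹ := by
      rw [← Real.rpow_natCast (Real.cos θ) 5, ← Real.rpow_mul hc.le,
        show ((5:ℕ):ℝ) * (-(4:ℝ)/5) = -(((4:ℕ):ℝ)) by push_cast; ring,
        Real.rpow_neg hc.le, Real.rpow_natCast]
    rw [e1, e2]
    rw [div_eq_mul_inv, inv_inv]
  unfold ff gg
  rw [hT, habs, hrpow]
  field_simp

lemma tan_image {a b : ℝ} (ha : -(π/2) < a) (hab : a < b) (hb : b < π/2) :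
    Real.tan '' Ioo a b = Ioo (Real.tan a) (Real.tan b) := by
  ext x
  constructor
  · rintro ⟨θ, hθ, rfl⟩
    exact ⟨Real.strictMonoOn_tan ⟨ha, by linarith [hθ.2]⟩
        ⟨by linarith [hθ.1], by linarith [hθ.2]⟩ hθ.1,
      Real.strictMonoOn_tan ⟨by linarith [hθ.1], by linarith [hθ.2]⟩ ⟨by linarith, hb⟩ hθ.2⟩
  · rintro ⟨h1, h2⟩
    refine ⟨Real.arctan x, ⟨?_, ?_⟩, Real.tan_arctan x⟩
    · have := Real.arctan_strictMono h1
      rwa [Real.arctan_tan ha (by linarith)] at this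
    · have := Real.arctan_strictMono h2
      rwa [Real.arctan_tan (by linarith) hb] at this

lemma subst_int {a b : ℝ} (ha : -(π/2) < a) (hab : a < b) (hb : b < π/2) :
    ∫ t in Real.tan a..Real.tan b, ff t = ∫ θ in a..b, gg θ := by
  have htab : Real.tan a < Real.tan b :=
    Real.strictMonoOn_tan ⟨ha, by linarith⟩ ⟨by linarith, hb⟩ hab
  rw [intervalIntegral.integral_of_le htab.le, integral_Ioc_eq_integral_Ioo,
    intervalIntegral.integral_of_le hab.le, integral_Ioc_eq_integral_Ioo,
    ← tan_image ha hab hb]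
  have hderiv : ∀ θ ∈ Ioo a b, HasDerivWithinAt Real.tan (1 / Real.cos θ ^ 2) (Ioo a b) θ := by
    intro θ hθ
    have hc : 0 < Real.cos θ := Real.cos_pos_of_mem_Ioo ⟨by linarith [hθ.1], by linarith [hθ.2]⟩
    exact (Real.hasDerivAt_tan hc.ne').hasDerivWithinAt
  rw [integral_image_eq_integral_abs_deriv_smul measurableSet_Ioo hderiv
    (Real.injOn_tan.mono (Ioo_subset_Ioo (by linarith) (by linarith))) ff]
  refine setIntegral_congr_fun measurableSet_Ioo ?_
  intro θ hθ
  have hθ' : θ ∈ Ioo (-(π/2)) (π/2) := ⟨by linarith [hθ.1], by linarith [hθ.2]⟩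
  have hc : 0 < Real.cos θ := Real.cos_pos_of_mem_Ioo hθ'
  show |1 / Real.cos θ ^ 2| • ff (Real.tan θ) = gg θ
  rw [smul_eq_mul, abs_of_pos (by positivity : (0:ℝ) < 1 / Real.cos θ ^ 2)]
  exact key_id hθ'

lemma whole_int : ∫ t : ℝ, ff t = ∫ θ in (-(π/2))..(π/2), gg θ := by
  have hab : -(π/2) < (π/2 : ℝ) := by linarith [pi_pos]
  rw [← setIntegral_univ, ← Real.image_tan_Ioo]
  have hderiv : ∀ θ ∈ Ioo (-(π/2)) (π/2),
      HasDerivWithinAt Real.tan (1 / Real.cos θ ^ 2) (Ioo (-(π/2)) (π/2)) θ := by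
    intro θ hθ
    exact (Real.hasDerivAt_tan (Real.cos_pos_of_mem_Ioo hθ).ne').hasDerivWithinAt
  rw [integral_image_eq_integral_abs_deriv_smul measurableSet_Ioo hderiv Real.injOn_tan ff,
    intervalIntegral.integral_of_le hab.le, integral_Ioc_eq_integral_Ioo]
  refine setIntegral_congr_fun measurableSet_Ioo ?_
  intro θ hθ
  have hc : 0 < Real.cos θ := Real.cos_pos_of_mem_Ioo hθ
  show |1 / Real.cos θ ^ 2| • ff (Real.tan θ) = gg θ
  rw [smul_eq_mul, abs_of_pos (by positivity : (0:ℝ) < 1 / Real.cos θ ^ 2)]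
  exact key_id hθ

lemma gg_per : Function.Periodic gg (π/5) := by
  intro x
  unfold gg
  rw [show 5*(x + π/5) - π/4 = (5*x - π/4) + π by ring, Real.sin_add_pi, abs_neg]

lemma gg_sym (x : ℝ) : gg (π/2 - x) = gg x := by
  unfold gg
  rw [show 5*(π/2 - x) - π/4 = -(5*x - π/4) + 2*π by ring, Real.sin_add_two_pi, Real.sin_neg,
    abs_neg]

lemma gg_pos {x : ℝ} (hx : x ∈ Ioo (π/4) (π/4 + π/5)) : 0 < gg x := by
  have h1 : π < 5*x - π/4 := by linarith [hx.1]
  have h2 : 5*x - π/4 < 2*π := by linarith [hx.2]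
  have hs : Real.sin (5*x - π/4) < 0 := by
    have := Real.sin_pos_of_pos_of_lt_pi (x := 5*x - π/4 - π) (by linarith) (by linarith)
    rw [Real.sin_sub_pi] at this
    linarith
  have : 0 < |Real.sin (5*x - π/4)| := abs_pos.mpr hs.ne
  unfold gg
  positivity



/-- values of the abelian integral `∫₁^{ξⱼ} (t²+1)|W(t)|^{−4/5} dt`
at the real roots `ξⱼ = tan(π/4 + 2πj/5)` of `W`, in terms of the fundamental
period `Ω = (1/5)∫_ℝ (t²+1)|W(t)|^{−4/5} dt`. -/
theorem stmt_6 (W f : ℝ → ℝ)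
    (hW : ∀ t : ℝ, W t = t ^ 5 - 5 * t ^ 4 - 10 * t ^ 3 + 10 * t ^ 2 + 5 * t - 1)
    (hf : ∀ t : ℝ, f t = (t ^ 2 + 1) * |W t| ^ (-(4 : ℝ) / 5))
    (Ω : ℝ) (hΩ : Ω = (1 / 5) * ∫ t : ℝ, f t)
    (ξ : ℕ → ℝ)
    (hξ : ∀ j : ℕ, ξ j = Real.tan (Real.pi / 4 + 2 * Real.pi * j / 5)) :
    0 < Ω ∧
    (∫ t in (1 : ℝ)..ξ 3, f t) = Ω ∧
    (∫ t in (1 : ℝ)..ξ 2, f t) = -Ω ∧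
    (∫ t in (1 : ℝ)..ξ 4, f t) = -2 * Ω ∧
    (∫ t in (1 : ℝ)..ξ 1, f t) = -3 * Ω ∧
    (∫ t in (-1 : ℝ)..1, f t) = (5 / 2) * Ω := by
  have hπ := Real.pi_pos
  have hfe : f = ff := funext fun t => by rw [hf t, hW t]; rfl
  have q : ∀ s t : ℝ, t = s + π/5 → (∫ x in s..t, gg x) = ∫ x in (π/4)..(π/4 + π/5), gg x := by
    rintro s t rfl
    exact gg_per.intervalIntegral_add_eq s (π/4)
  set A : ℝ := ∫ x in (π/4)..(π/4 + π/5), gg x with hA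
  -- whole line
  have e1 : (∫ x in (-(π/2))..(-(3*π/10)), gg x) = A := q _ _ (by ring)
  have e2 : (∫ x in (-(3*π/10))..(-(π/10)), gg x) = A := q _ _ (by ring)
  have e3 : (∫ x in (-(π/10))..(π/10), gg x) = A := q _ _ (by ring)
  have e4 : (∫ x in (π/10)..(3*π/10), gg x) = A := q _ _ (by ring)
  have e5 : (∫ x in (3*π/10)..(π/2), gg x) = A := q _ _ (by ring)
  have t1 := integral_add_adjacent_intervals (gg_int (-(π/2)) (-(3*π/10)))
    (gg_int (-(3*π/10)) (-(π/10)))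
  have t2 := integral_add_adjacent_intervals (gg_int (-(π/2)) (-(π/10))) (gg_int (-(π/10)) (π/10))
  have t3 := integral_add_adjacent_intervals (gg_int (-(π/2)) (π/10)) (gg_int (π/10) (3*π/10))
  have t4 := integral_add_adjacent_intervals (gg_int (-(π/2)) (3*π/10)) (gg_int (3*π/10) (π/2))
  have etot : (∫ x in (-(π/2))..(π/2), gg x) = 5 * A := by linarith
  have hΩA : Ω = A := by
    rw [hΩ, hfe, whole_int, etot]; ring
  have hApos : 0 < A :=
    intervalIntegral_pos_of_pos_on (gg_int _ _) (fun x hx => gg_pos hx) (by linarith)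
  -- roots
  have hξ3 : ξ 3 = Real.tan (π/4 + π/5) := by
    rw [hξ 3]; push_cast
    rw [show π/4 + 2*π*(3:ℝ)/5 = (π/4 + π/5) + π by ring, Real.tan_periodic]
  have hξ2 : ξ 2 = Real.tan (π/20) := by
    rw [hξ 2]; push_cast
    rw [show π/4 + 2*π*(2:ℝ)/5 = (π/20) + π by ring, Real.tan_periodic]
  have hξ4 : ξ 4 = Real.tan (-(3*π/20)) := by
    rw [hξ 4]; push_cast
    rw [show π/4 + 2*π*(4:ℝ)/5 = ((-(3*π/20)) + π) + π by ring, Real.tan_periodic,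
      Real.tan_periodic]
  have hξ1 : ξ 1 = Real.tan (-(7*π/20)) := by
    rw [hξ 1]; push_cast
    rw [show π/4 + 2*π*(1:ℝ)/5 = (-(7*π/20)) + π by ring, Real.tan_periodic]
  have h1tan : (1:ℝ) = Real.tan (π/4) := Real.tan_pi_div_four.symm
  have hm1tan : (-1:ℝ) = Real.tan (-(π/4)) := by rw [Real.tan_neg, Real.tan_pi_div_four]
  refine ⟨by rw [hΩA]; exact hApos, ?_, ?_, ?_, ?_, ?_⟩
  · -- ∫ 1..ξ3 = Ω
    rw [hfe, hξ3, h1tan, subst_int (by linarith) (by linarith) (by linarith)]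
    rw [q (π/4) (π/4 + π/5) rfl, hΩA]
  · -- ∫ 1..ξ2 = -Ω
    rw [hfe, hξ2, h1tan, intervalIntegral.integral_symm,
      subst_int (by linarith) (by linarith) (by linarith), q (π/20) (π/4) (by ring), hΩA]
  · -- ∫ 1..ξ4 = -2Ω
    rw [hfe, hξ4, h1tan, intervalIntegral.integral_symm,
      subst_int (by linarith) (by linarith) (by linarith)]
    have s1 := integral_add_adjacent_intervals (gg_int (-(3*π/20)) (π/20)) (gg_int (π/20) (π/4))
    have v1 : (∫ x in (-(3*π/20))..(π/20), gg x) = A := q _ _ (by ring)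
    have v2 : (∫ x in (π/20)..(π/4), gg x) = A := q _ _ (by ring)
    rw [hΩA]; linarith
  · -- ∫ 1..ξ1 = -3Ω
    rw [hfe, hξ1, h1tan, intervalIntegral.integral_symm,
      subst_int (by linarith) (by linarith) (by linarith)]
    have s1 := integral_add_adjacent_intervals (gg_int (-(7*π/20)) (-(3*π/20)))
      (gg_int (-(3*π/20)) (π/20))
    have s2 := integral_add_adjacent_intervals (gg_int (-(7*π/20)) (π/20)) (gg_int (π/20) (π/4))
    have v0 : (∫ x in (-(7*π/20))..(-(3*π/20)), gg x) = A := q _ _ (by ring)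
    have v1 : (∫ x in (-(3*π/20))..(π/20), gg x) = A := q _ _ (by ring)
    have v2 : (∫ x in (π/20)..(π/4), gg x) = A := q _ _ (by ring)
    rw [hΩA]; linarith
  · -- ∫ -1..1 = (5/2)Ω
    rw [hfe, hm1tan, h1tan, subst_int (by linarith) (by linarith) (by linarith)]
    have s1 := integral_add_adjacent_intervals (gg_int (-(π/4)) (-(π/20)))
      (gg_int (-(π/20)) (3*π/20))
    have s2 := integral_add_adjacent_intervals (gg_int (-(π/4)) (3*π/20)) (gg_int (3*π/20) (π/4))
    have v0 : (∫ x in (-(π/4))..(-(π/20)), gg x) = A := q _ _ (by ring)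
    have v1 : (∫ x in (-(π/20))..(3*π/20), gg x) = A := q _ _ (by ring)
    have vhalf : (∫ x in (3*π/20)..(π/4), gg x) = A / 2 := by
      have hrefl := intervalIntegral.integral_comp_sub_left (a := 3*π/20) (b := π/4)
        (fun x => gg x) (π/2)
      simp only [gg_sym] at hrefl
      rw [show π/2 - π/4 = π/4 by ring, show π/2 - 3*π/20 = 7*π/20 by ring] at hrefl
      have s3 := integral_add_adjacent_intervals (gg_int (3*π/20) (π/4)) (gg_int (π/4) (7*π/20))
      have v3 : (∫ x in (3*π/20)..(7*π/20), gg x) = A := q _ _ (by ring)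
      linarith
    rw [hΩA]; linarith
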